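/- There exists γ₀ > 0, depending only on the dimension d, such that for every 0 < γ ≤ γ₀, every finite rectangle Λ ⊂ ℤ^d, and every δ with γ^{1/4}/4 < δ ≤ 1, the minimum level spacing of H(u) satisfies P( min_{α ≠ β} |E_α − E_β| < δ ) ≤ 3·√δ·|Λ|², where E_1, …, E_{2|Λ|} are the eigenvalues of H(u) counted with multiplicity and the minimum is over pairs of distinct indices. -/

import Mathlib

open Matrix MeasureTheory

/-- The uniform probability measure on `[-1,1]`. -/
noncomputable def unif : Measure ℝ :=
  ((2 : NNReal))⁻¹ • (volume.restrict (Set.Icc (-1 : ℝ) 1))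

instance : IsProbabilityMeasure unif := by
  constructor
  rw [unif, Measure.smul_apply, Measure.restrict_apply_univ, Real.volume_Icc]
  norm_num
  rw [ENNReal.smul_def]
  simp [ENNReal.inv_mul_cancel]

/-- The product of uniform measures on `[-1,1]^ι` (i.i.d. uniform random variables). -/
noncomputable def unifPi (ι : Type*) [Fintype ι] : Measure (ι → ℝ) :=
  Measure.pi fun _ => unif

/-- The ℓ¹ distance `|x-y| = Σᵢ |xᵢ-yᵢ|` on `ℤ^d`, as a natural number. -/
def dist1 {d : ℕ} (x y : Fin d → ℤ) : ℕ := ∑ i, (x i - y i).natAbs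

/-- The random block Hamiltonian: diagonal 2×2 block `[[u_x,1],[1,-u_x]]` at each
position `x ∈ Λ`, and block `γ·I₂` between nearest-neighbor positions. -/
noncomputable def Ham (d : ℕ) (γ : ℝ) (Λ : Finset (Fin d → ℤ)) (u : {x // x ∈ Λ} → ℝ) :
    Matrix ({x // x ∈ Λ} × Fin 2) ({x // x ∈ Λ} × Fin 2) ℝ := fun s t =>
  if s.1 = t.1 then
    (if s.2 = t.2 then (if s.2 = 0 then u s.1 else -u s.1) else 1)
  else if dist1 (s.1 : Fin d → ℤ) (t.1 : Fin d → ℤ) = 1 then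
    (if s.2 = t.2 then γ else 0)
  else 0

open scoped ENNReal NNReal

instance (ι : Type*) [Fintype ι] : IsProbabilityMeasure (unifPi ι) := by
  unfold unifPi; infer_instance

lemma dist1_comm {d : ℕ} (x y : Fin d → ℤ) : dist1 x y = dist1 y x := by
  unfold dist1; congr 1; funext i; rw [← Int.natAbs_neg, neg_sub]

lemma dist1_eq_one {d : ℕ} {a y : Fin d → ℤ} (h : dist1 a y = 1) :
    ∃ i, (y i - a i).natAbs = 1 ∧ ∀ j, j ≠ i → y j = a j := by
  unfold dist1 at h
  have hne : ∃ i, (a i - y i).natAbs ≠ 0 := by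
    by_contra hc
    push_neg at hc
    rw [Finset.sum_eq_zero (fun i _ => hc i)] at h
    exact one_ne_zero h.symm
  obtain ⟨i, hi⟩ := hne
  have hle : (a i - y i).natAbs ≤ 1 :=
    h ▸ Finset.single_le_sum (f := fun j => (a j - y j).natAbs) (fun _ _ => Nat.zero_le _)
      (Finset.mem_univ i)
  have h1 : (a i - y i).natAbs = 1 := le_antisymm hle (Nat.one_le_iff_ne_zero.2 hi)
  have heq : (a i - y i).natAbs + ∑ k ∈ Finset.univ.erase i, (a k - y k).natAbs
      = ∑ k, (a k - y k).natAbs :=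
    Finset.add_sum_erase Finset.univ (fun k => (a k - y k).natAbs) (Finset.mem_univ i)
  have hrest : ∑ k ∈ Finset.univ.erase i, (a k - y k).natAbs = 0 := by omega
  refine ⟨i, by rw [← Int.natAbs_neg, neg_sub] at h1; exact h1, fun j hj => ?_⟩
  have := (Finset.sum_eq_zero_iff).1 hrest j (Finset.mem_erase.2 ⟨hj, Finset.mem_univ j⟩)
  have : a j - y j = 0 := Int.natAbs_eq_zero.1 this
  omega

lemma card_neighbors {d : ℕ} (Λ : Finset (Fin d → ℤ)) (a : Fin d → ℤ) :
    (Λ.filter fun y => dist1 a y = 1).card ≤ 2 * d := by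
  classical
  rcases Nat.eq_zero_or_pos d with hd | hd
  · subst hd
    have : (Λ.filter fun y => dist1 a y = 1).card = 0 := by
      rw [Finset.card_eq_zero, Finset.filter_eq_empty_iff]
      intro y _
      simp [dist1]
    omega
  have : Inhabited (Fin d × Bool) := ⟨(⟨0, hd⟩, false)⟩
  have hcard : (Λ.filter fun y => dist1 a y = 1).card ≤ Fintype.card (Fin d × Bool) := by
    apply Finset.card_le_card_of_injOn
      (fun y => if h : dist1 a y = 1 then ((dist1_eq_one h).choose,
        decide (a (dist1_eq_one h).choose < y (dist1_eq_one h).choose)) else default)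
    · intro y _; exact Finset.mem_univ _
    · intro y hy z hz hyz
      simp only [Finset.mem_coe, Finset.mem_filter] at hy hz
      simp only [dif_pos hy.2, dif_pos hz.2] at hyz
      obtain ⟨hy1, hy2⟩ := (dist1_eq_one hy.2).choose_spec
      obtain ⟨hz1, hz2⟩ := (dist1_eq_one hz.2).choose_spec
      set i := (dist1_eq_one hy.2).choose with hidef
      set k := (dist1_eq_one hz.2).choose with hkdef
      clear_value i k
      have hik : i = k := congrArg Prod.fst hyz
      have hb : decide (a i < y i) = decide (a k < z k) := congrArg Prod.snd hyz
      funext j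
      by_cases hj : j = i
      · subst hj; subst hik
        have h1 : y j - a j = 1 ∨ y j - a j = -1 := by
          rcases Int.natAbs_eq_iff.1 hy1 with h | h
          · left; omega
          · right; omega
        have h2 : z j - a j = 1 ∨ z j - a j = -1 := by
          rcases Int.natAbs_eq_iff.1 hz1 with h | h
          · left; omega
          · right; omega
        have h3 : a j < y j ↔ a j < z j := decide_eq_decide.mp hb
        omega
      · rw [hy2 j hj, hz2 j (by rw [← hik]; exact hj)]
  simpa [Fintype.card_prod, mul_comm] using hcard


lemma ham_isHermitian (d : ℕ) (γ : ℝ) (Λ : Finset (Fin d → ℤ)) (u : {x // x ∈ Λ} → ℝ) :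
    (Ham d γ Λ u).IsHermitian := by
  ext s t
  simp only [conjTranspose_apply, star_trivial, Ham]
  by_cases h1 : t.1 = s.1
  · rw [if_pos h1, if_pos h1.symm]
    by_cases h2 : t.2 = s.2
    · rw [if_pos h2, if_pos h2.symm, h2, h1]
    · rw [if_neg h2, if_neg (fun h => h2 h.symm)]
  · rw [if_neg h1, if_neg (fun h : s.1 = t.1 => h1 h.symm),
      show (dist1 (t.1 : Fin d → ℤ) s.1) = dist1 (s.1 : Fin d → ℤ) t.1 from dist1_comm _ _]
    by_cases h3 : dist1 (s.1 : Fin d → ℤ) t.1 = 1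
    · rw [if_pos h3, if_pos h3]
      by_cases h2 : t.2 = s.2
      · rw [if_pos h2, if_pos h2.symm]
      · rw [if_neg h2, if_neg (fun h => h2 h.symm)]
    · rw [if_neg h3, if_neg h3]

/-- The hopping part of the Hamiltonian. -/
noncomputable def Hop (d : ℕ) (γ : ℝ) (Λ : Finset (Fin d → ℤ)) :
    Matrix ({x // x ∈ Λ} × Fin 2) ({x // x ∈ Λ} × Fin 2) ℝ := fun s t =>
  if s.1 ≠ t.1 ∧ dist1 (s.1 : Fin d → ℤ) t.1 = 1 ∧ s.2 = t.2 then γ else 0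

lemma ham_decomp (d : ℕ) (γ : ℝ) (Λ : Finset (Fin d → ℤ)) (u : {x // x ∈ Λ} → ℝ) :
    Ham d γ Λ u = Ham d 0 Λ u + Hop d γ Λ := by
  ext s t
  simp only [Ham, Hop, Matrix.add_apply]
  by_cases h1 : s.1 = t.1
  · simp [h1]
  · by_cases h3 : dist1 (s.1 : Fin d → ℤ) t.1 = 1
    · by_cases h2 : s.2 = t.2 <;> simp [h1, h3, h2]
    · simp [h1, h3]

lemma hop_rowsum (d : ℕ) (γ : ℝ) (hγ : 0 ≤ γ) (Λ : Finset (Fin d → ℤ))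
    (s : {x // x ∈ Λ} × Fin 2) : ∑ t, |Hop d γ Λ s t| ≤ 2 * d * γ := by
  classical
  have key : ∀ t, |Hop d γ Λ s t| =
      if t.1.1 ∈ Λ.filter (fun y => dist1 (s.1 : Fin d → ℤ) y = 1) ∧ s.1 ≠ t.1 ∧ s.2 = t.2
      then γ else 0 := by
    intro t
    simp only [Hop, Finset.mem_filter]
    by_cases h : s.1 ≠ t.1 ∧ dist1 (s.1 : Fin d → ℤ) t.1 = 1 ∧ s.2 = t.2
    · rw [if_pos h, if_pos ⟨⟨t.1.2, h.2.1⟩, h.1, h.2.2⟩, abs_of_nonneg hγ]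
    · rw [if_neg h, if_neg, abs_zero]
      rintro ⟨⟨_, hd⟩, hne, hs⟩
      exact h ⟨hne, hd, hs⟩
  rw [Finset.sum_congr rfl (fun t _ => key t), Finset.sum_ite, Finset.sum_const,
    Finset.sum_const_zero, add_zero]
  have hcard : (Finset.univ.filter (fun t : {x // x ∈ Λ} × Fin 2 =>
      t.1.1 ∈ Λ.filter (fun y => dist1 (s.1 : Fin d → ℤ) y = 1) ∧ s.1 ≠ t.1 ∧ s.2 = t.2)).card
      ≤ 2 * d := by
    refine le_trans (Finset.card_le_card_of_injOn (fun t => (t.1 : Fin d → ℤ)) ?_ ?_)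
      (card_neighbors Λ s.1)
    · intro t ht
      simp only [Finset.mem_coe, Finset.mem_filter] at ht ⊢
      exact ht.2.1
    · intro t ht t' ht' h
      simp only [Finset.mem_coe, Finset.mem_filter] at ht ht'
      have h1 : t.1 = t'.1 := Subtype.ext h
      have h2 : t.2 = t'.2 := ht.2.2.2.symm.trans ht'.2.2.2
      exact Prod.ext h1 h2
  calc (Finset.univ.filter _).card • γ ≤ (2 * d) • γ := nsmul_le_nsmul_left hγ hcard
    _ = 2 * d * γ := by rw [nsmul_eq_mul]; push_cast; ring


/-- Schur test: row and column sums bounded by `R` gives `‖Mv‖² ≤ R²‖v‖²`. -/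
lemma mulVec_sq_le {n : Type*} [Fintype n] (M : Matrix n n ℝ) (R : ℝ) (hR : 0 ≤ R)
    (hrow : ∀ s, ∑ t, |M s t| ≤ R) (hcol : ∀ t, ∑ s, |M s t| ≤ R) (v : n → ℝ) :
    ∑ s, (M.mulVec v s) ^ 2 ≤ R ^ 2 * ∑ s, v s ^ 2 := by
  have step1 : ∀ s, (M.mulVec v s) ^ 2 ≤ R * ∑ t, |M s t| * v t ^ 2 := by
    intro s
    have habs : (M.mulVec v s) ^ 2 ≤ (∑ t, |M s t| * |v t|) ^ 2 := by
      rw [mulVec, dotProduct]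
      have h1 : |∑ t, M s t * v t| ≤ ∑ t, |M s t| * |v t| := by
        refine le_trans (Finset.abs_sum_le_sum_abs _ _) ?_
        exact Finset.sum_le_sum fun t _ => le_of_eq (abs_mul _ _)
      calc (∑ t, M s t * v t) ^ 2 = |∑ t, M s t * v t| ^ 2 := (sq_abs _).symm
        _ ≤ (∑ t, |M s t| * |v t|) ^ 2 := by
            apply pow_le_pow_left₀ (abs_nonneg _) h1
    have hcs : (∑ t, |M s t| * |v t|) ^ 2 ≤ (∑ t, |M s t|) * ∑ t, |M s t| * v t ^ 2 := by
      have := Finset.sum_mul_sq_le_sq_mul_sq Finset.univ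
        (fun t => Real.sqrt |M s t|) (fun t => Real.sqrt |M s t| * |v t|)
      have heq : ∀ t, Real.sqrt |M s t| * (Real.sqrt |M s t| * |v t|) = |M s t| * |v t| := by
        intro t; rw [← mul_assoc, Real.mul_self_sqrt (abs_nonneg _)]
      have heq2 : ∀ t, (Real.sqrt |M s t|) ^ 2 = |M s t| := fun t => Real.sq_sqrt (abs_nonneg _)
      have heq3 : ∀ t, (Real.sqrt |M s t| * |v t|) ^ 2 = |M s t| * v t ^ 2 := by
        intro t; rw [mul_pow, Real.sq_sqrt (abs_nonneg _), sq_abs]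
      calc (∑ t, |M s t| * |v t|) ^ 2
          = (∑ t, Real.sqrt |M s t| * (Real.sqrt |M s t| * |v t|)) ^ 2 := by
            rw [Finset.sum_congr rfl (fun t _ => (heq t).symm)]
        _ ≤ (∑ t, (Real.sqrt |M s t|) ^ 2) * ∑ t, (Real.sqrt |M s t| * |v t|) ^ 2 := this
        _ = (∑ t, |M s t|) * ∑ t, |M s t| * v t ^ 2 := by
            rw [Finset.sum_congr rfl (fun t _ => heq2 t), Finset.sum_congr rfl (fun t _ => heq3 t)]
    refine le_trans habs (le_trans hcs ?_)
    apply mul_le_mul_of_nonneg_right (hrow s)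
    exact Finset.sum_nonneg fun t _ => mul_nonneg (abs_nonneg _) (sq_nonneg _)
  calc ∑ s, (M.mulVec v s) ^ 2 ≤ ∑ s, R * ∑ t, |M s t| * v t ^ 2 :=
        Finset.sum_le_sum fun s _ => step1 s
    _ = R * ∑ t, (∑ s, |M s t|) * v t ^ 2 := by
        rw [← Finset.mul_sum, Finset.sum_comm]
        congr 1
        exact Finset.sum_congr rfl fun t _ => (Finset.sum_mul _ _ _).symm
    _ ≤ R * ∑ t, R * v t ^ 2 := by
        apply mul_le_mul_of_nonneg_left _ hR
        exact Finset.sum_le_sum fun t _ =>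
          mul_le_mul_of_nonneg_right (hcol t) (sq_nonneg _)
    _ = R ^ 2 * ∑ s, v s ^ 2 := by rw [← Finset.mul_sum]; ring


lemma approx_eigenvalue {n : Type*} [Fintype n] [DecidableEq n] {A : Matrix n n ℝ}
    (hA : A.IsHermitian) (μ r : ℝ) (hr : 0 ≤ r) (v : n → ℝ) (hv : v ≠ 0)
    (hbound : ∑ s, ((A.mulVec v - μ • v) s) ^ 2 ≤ r ^ 2 * ∑ s, v s ^ 2) :
    ∃ α, |hA.eigenvalues α - μ| ≤ r := by
  by_contra hc
  push_neg at hc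
  set w : n → ℝ := A.mulVec v - μ • v with hw
  set vE : EuclideanSpace ℝ n := (WithLp.equiv 2 (n → ℝ)).symm v with hvE
  set wE : EuclideanSpace ℝ n := (WithLp.equiv 2 (n → ℝ)).symm w with hwE
  set B := hA.eigenvectorBasis with hB
  set c : n → ℝ := fun α => B.repr vE α with hc'
  have hsymm : Aᵀ = A := by
    ext i j
    have := congrFun (congrFun hA.eq i) j
    simpa [Matrix.conjTranspose_apply] using this
  -- sums as norms
  have normsq : ∀ x : n → ℝ, ∑ s, x s ^ 2 = ‖(WithLp.equiv 2 (n → ℝ)).symm x‖ ^ 2 := by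
    intro x
    rw [EuclideanSpace.norm_eq, Real.sq_sqrt (Finset.sum_nonneg fun s _ => sq_nonneg _)]
    exact Finset.sum_congr rfl fun s _ => by simp [sq_abs]
  have parseval : ∀ x : EuclideanSpace ℝ n, ‖x‖ ^ 2 = ∑ α, (B.repr x α) ^ 2 := by
    intro x
    rw [← B.repr.norm_map x, EuclideanSpace.norm_eq,
      Real.sq_sqrt (Finset.sum_nonneg fun s _ => sq_nonneg _)]
    exact Finset.sum_congr rfl fun s _ => by simp [sq_abs]
  -- repr of w
  have hreprw : ∀ α, B.repr wE α = (hA.eigenvalues α - μ) * c α := by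
    intro α
    have hcα : c α = B.repr vE α := rfl
    rw [hcα, B.repr_apply_apply, B.repr_apply_apply]
    have hBα : ∀ (y : n → ℝ),
        (inner ℝ (B α) ((WithLp.equiv 2 (n → ℝ)).symm y) : ℝ)
        = ((WithLp.equiv 2 (n → ℝ)) (B α)) ⬝ᵥ y := by
      intro y
      rw [PiLp.inner_apply]
      simp [dotProduct, mul_comm]
    rw [hwE, hBα w, hvE, hBα v, hw]
    have hAv : ((WithLp.equiv 2 (n → ℝ)) (B α)) ⬝ᵥ (A.mulVec v)
        = hA.eigenvalues α * (((WithLp.equiv 2 (n → ℝ)) (B α)) ⬝ᵥ v) := by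
      rw [Matrix.dotProduct_mulVec, ← Matrix.mulVec_transpose, hsymm]
      erw [hA.mulVec_eigenvectorBasis]
      rw [smul_dotProduct]
      rfl
    rw [dotProduct_sub, hAv, dotProduct_smul, smul_eq_mul]
    ring
  -- contradiction
  obtain ⟨α₀, hα₀⟩ : ∃ α, c α ≠ 0 := by
    by_contra hall
    push_neg at hall
    have : vE = 0 := by
      have : B.repr vE = 0 := by
        ext α; exact hall α
      simpa using congrArg B.repr.symm this
    exact hv (by simpa [hvE] using congrArg (WithLp.equiv 2 (n → ℝ)) this)
  have hSw : ∑ s, w s ^ 2 = ∑ α, ((hA.eigenvalues α - μ) * c α) ^ 2 := by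
    rw [normsq w, parseval wE]
    exact Finset.sum_congr rfl fun α _ => by rw [hreprw α]
  have hSv : ∑ s, v s ^ 2 = ∑ α, c α ^ 2 := by
    rw [normsq v, parseval vE]
  have hgt : r ^ 2 * ∑ α, c α ^ 2 < ∑ α, ((hA.eigenvalues α - μ) * c α) ^ 2 := by
    rw [Finset.mul_sum]
    have hterm : ∀ α, r ^ 2 * c α ^ 2 ≤ ((hA.eigenvalues α - μ) * c α) ^ 2 := by
      intro α
      rw [mul_pow]
      apply mul_le_mul_of_nonneg_right _ (sq_nonneg _)
      calc r ^ 2 ≤ |hA.eigenvalues α - μ| ^ 2 := by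
            apply pow_le_pow_left₀ hr (le_of_lt (hc α))
        _ = (hA.eigenvalues α - μ) ^ 2 := sq_abs _
    apply Finset.sum_lt_sum (fun α _ => hterm α)
    refine ⟨α₀, Finset.mem_univ _, ?_⟩
    rw [mul_pow]
    apply mul_lt_mul_of_pos_right _ (by positivity)
    calc r ^ 2 < |hA.eigenvalues α₀ - μ| ^ 2 := by
          apply pow_lt_pow_left₀ (hc α₀) hr
          norm_num
      _ = (hA.eigenvalues α₀ - μ) ^ 2 := sq_abs _
  rw [hSw, hSv] at hbound
  exact absurd hbound (not_le.2 hgt)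

noncomputable def sgn2 (i : Fin 2) : ℝ := if i = 0 then 1 else -1

/-- explicit eigenvector of the decoupled Hamiltonian -/
noncomputable def evec {d : ℕ} {Λ : Finset (Fin d → ℤ)} (u : {x // x ∈ Λ} → ℝ)
    (j : {x // x ∈ Λ} × Fin 2) : {x // x ∈ Λ} × Fin 2 → ℝ := fun s =>
  if s.1 = j.1 then
    (if s.2 = 0 then 1 else sgn2 j.2 * Real.sqrt (1 + u j.1 ^ 2) - u j.1)
  else 0

lemma evec_ne_zero {d : ℕ} {Λ : Finset (Fin d → ℤ)} (u : {x // x ∈ Λ} → ℝ)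
    (j : {x // x ∈ Λ} × Fin 2) : evec u j ≠ 0 := by
  intro h
  have := congrFun h (j.1, 0)
  simp [evec] at this

lemma ham0_mulVec_evec {d : ℕ} {Λ : Finset (Fin d → ℤ)} (u : {x // x ∈ Λ} → ℝ)
    (j : {x // x ∈ Λ} × Fin 2) :
    (Ham d 0 Λ u).mulVec (evec u j) = (sgn2 j.2 * Real.sqrt (1 + u j.1 ^ 2)) • evec u j := by
  classical
  set μ : ℝ := sgn2 j.2 * Real.sqrt (1 + u j.1 ^ 2) with hμ
  have hμsq : μ ^ 2 = 1 + u j.1 ^ 2 := by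
    rw [hμ, mul_pow, sgn2]
    have : Real.sqrt (1 + u j.1 ^ 2) ^ 2 = 1 + u j.1 ^ 2 :=
      Real.sq_sqrt (by positivity)
    split <;> simp [this]
  funext s
  obtain ⟨y, k⟩ := s
  rw [mulVec, dotProduct, Fintype.sum_prod_type]
  rw [Finset.sum_eq_single_of_mem j.1 (Finset.mem_univ _) ?side]
  case side =>
    intro z _ hz
    apply Finset.sum_eq_zero
    intro l _
    have : evec u j (z, l) = 0 := by
      simp only [evec]
      rw [if_neg hz]
    rw [this, mul_zero]
  · by_cases hy : y = j.1
    · subst hy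
      rw [Fin.sum_univ_two]
      have e0 : evec u j (j.1, 0) = 1 := by simp [evec]
      have e1 : evec u j (j.1, 1) = μ - u j.1 := by simp [evec, hμ]
      rw [e0, e1]
      have hk : k = 0 ∨ k = 1 := by omega
      rcases hk with hk | hk <;> subst hk
      · have h00 : Ham d 0 Λ u (j.1, 0) (j.1, 0) = u j.1 := by simp [Ham]
        have h01 : Ham d 0 Λ u (j.1, 0) (j.1, 1) = 1 := by simp [Ham]
        rw [h00, h01]
        simp only [Pi.smul_apply, smul_eq_mul]
        rw [e0]
        ring
      · have h10 : Ham d 0 Λ u (j.1, 1) (j.1, 0) = 1 := by simp [Ham]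
        have h11 : Ham d 0 Λ u (j.1, 1) (j.1, 1) = -u j.1 := by simp [Ham]
        rw [h10, h11]
        simp only [Pi.smul_apply, smul_eq_mul]
        rw [e1]
        nlinarith [hμsq]
    · have hz : ∀ l, Ham d 0 Λ u (y, k) (j.1, l) = 0 := by
        intro l
        simp only [Ham]
        rw [if_neg hy]
        split
        · split <;> rfl
        · rfl
      rw [Fin.sum_univ_two, hz 0, hz 1]
      have : evec u j (y, k) = 0 := by
        simp only [evec]
        rw [if_neg hy]
      simp [this]

lemma hop_symm (d : ℕ) (γ : ℝ) (Λ : Finset (Fin d → ℤ)) (s t : {x // x ∈ Λ} × Fin 2) :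
    Hop d γ Λ s t = Hop d γ Λ t s := by
  simp only [Hop]
  by_cases h : s.1 ≠ t.1 ∧ dist1 (s.1 : Fin d → ℤ) t.1 = 1 ∧ s.2 = t.2
  · rw [if_pos h, if_pos ⟨h.1.symm, by rw [dist1_comm]; exact h.2.1, h.2.2.symm⟩]
  · rw [if_neg h, if_neg]
    rintro ⟨h1, h2, h3⟩
    exact h ⟨h1.symm, by rw [dist1_comm]; exact h2, h3.symm⟩

lemma hop_colsum (d : ℕ) (γ : ℝ) (hγ : 0 ≤ γ) (Λ : Finset (Fin d → ℤ))
    (t : {x // x ∈ Λ} × Fin 2) : ∑ s, |Hop d γ Λ s t| ≤ 2 * d * γ := by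
  calc ∑ s, |Hop d γ Λ s t| = ∑ s, |Hop d γ Λ t s| :=
      Finset.sum_congr rfl fun s _ => by rw [hop_symm]
    _ ≤ 2 * d * γ := hop_rowsum d γ hγ Λ t

/-- Deterministic level-spacing bound given separation of the decoupled eigenvalues. -/
lemma spacing_of_sep {d : ℕ} (γ δ : ℝ) (hγ : 0 < γ) (hδ : 0 < δ) (hδ1 : δ ≤ 1)
    (hsmall : 4 * d * γ ≤ 1 / 2) (Λ : Finset (Fin d → ℤ)) (u : {x // x ∈ Λ} → ℝ)
    (hsep : ∀ x y : {x // x ∈ Λ}, x ≠ y →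
      |Real.sqrt (1 + u x ^ 2) - Real.sqrt (1 + u y ^ 2)| > δ + 4 * d * γ)
    (hherm : (Ham d γ Λ u).IsHermitian) :
    ∀ α β, α ≠ β → ¬ |hherm.eigenvalues α - hherm.eigenvalues β| < δ := by
  classical
  set R : ℝ := 2 * d * γ with hR
  have hR0 : 0 ≤ R := by positivity
  set f : {x // x ∈ Λ} → ℝ := fun x => Real.sqrt (1 + u x ^ 2) with hf
  have hf1 : ∀ x, 1 ≤ f x := by
    intro x
    have h0 : (0:ℝ) ≤ 1 + u x ^ 2 := by positivity
    have hs := Real.sq_sqrt h0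
    nlinarith [Real.sqrt_nonneg (1 + u x ^ 2), sq_nonneg (u x)]
  set μv : {x // x ∈ Λ} × Fin 2 → ℝ := fun j => sgn2 j.2 * f j.1 with hμv
  -- each μv j is close to some eigenvalue
  have happrox : ∀ j, ∃ α, |hherm.eigenvalues α - μv j| ≤ R := by
    intro j
    apply approx_eigenvalue hherm (μv j) R hR0 (evec u j) (evec_ne_zero u j)
    have hKv : (Ham d γ Λ u).mulVec (evec u j) - μv j • evec u j
        = (Hop d γ Λ).mulVec (evec u j) := by
      rw [ham_decomp d γ Λ u, Matrix.add_mulVec, ham0_mulVec_evec u j]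
      simp [hμv, hf]
    rw [hKv]
    exact mulVec_sq_le _ R hR0 (hop_rowsum d γ (le_of_lt hγ) Λ)
      (hop_colsum d γ (le_of_lt hγ) Λ) _
  -- separation of the decoupled eigenvalues
  have hμsep : ∀ j k, j ≠ k → |μv j - μv k| > δ + 2 * R := by
    intro j k hjk
    have h2R : δ + 2 * R = δ + 4 * d * γ := by rw [hR]; ring
    rw [h2R]
    by_cases hii : j.2 = k.2
    · have hxy : j.1 ≠ k.1 := by
        intro h
        exact hjk (Prod.ext h hii)
      have : μv j - μv k = sgn2 j.2 * (f j.1 - f k.1) := by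
        rw [hμv]; simp only []; rw [hii]; ring
      rw [this, abs_mul]
      have : |sgn2 j.2| = 1 := by
        rw [sgn2]; split <;> simp
      rw [this, one_mul]
      exact hsep j.1 k.1 hxy
    · have habs : |μv j - μv k| = f j.1 + f k.1 := by
        have s0 : sgn2 0 = 1 := by simp [sgn2]
        have s1 : sgn2 1 = -1 := by simp [sgn2]
        have hfj := hf1 j.1
        have hfk := hf1 k.1
        have hμj : μv j = sgn2 j.2 * f j.1 := rfl
        have hμk : μv k = sgn2 k.2 * f k.1 := rfl
        have h2 : ∀ i : Fin 2, i = 0 ∨ i = 1 := fun i => by omega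
        rcases h2 j.2 with h | h <;> rcases h2 k.2 with h' | h'
        · exact absurd (h.trans h'.symm) hii
        · rw [hμj, hμk, h, h', s0, s1]
          rw [show (1:ℝ) * f j.1 - -1 * f k.1 = f j.1 + f k.1 by ring]
          exact abs_of_nonneg (by linarith)
        · rw [hμj, hμk, h, h', s0, s1]
          rw [show (-1:ℝ) * f j.1 - 1 * f k.1 = -(f j.1 + f k.1) by ring, abs_neg]
          exact abs_of_nonneg (by linarith)
        · exact absurd (h.trans h'.symm) hii
      rw [habs]
      have := hf1 j.1
      have := hf1 k.1
      linarith
  -- the chosen map is injective hence surjective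
  set φ : {x // x ∈ Λ} × Fin 2 → {x // x ∈ Λ} × Fin 2 := fun j => (happrox j).choose with hφ
  have hφspec : ∀ j, |hherm.eigenvalues (φ j) - μv j| ≤ R := fun j => (happrox j).choose_spec
  have hφinj : Function.Injective φ := by
    intro j k hjkφ
    by_contra hjk
    have h1 := hφspec j
    have h2 := hφspec k
    rw [hjkφ] at h1
    have : |μv j - μv k| ≤ 2 * R := by
      calc |μv j - μv k| = |(hherm.eigenvalues (φ k) - μv k) - (hherm.eigenvalues (φ k) - μv j)| := by
            congr 1; ring
        _ ≤ |hherm.eigenvalues (φ k) - μv k| + |hherm.eigenvalues (φ k) - μv j| := abs_sub _ _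
        _ ≤ R + R := add_le_add h2 h1
        _ = 2 * R := by ring
    have := hμsep j k hjk
    linarith
  have hφsurj : Function.Surjective φ := Finite.surjective_of_injective hφinj
  intro α β hab hlt
  obtain ⟨j, hj⟩ := hφsurj α
  obtain ⟨k, hk⟩ := hφsurj β
  have hjk : j ≠ k := fun h => hab (hj ▸ hk ▸ congrArg φ h)
  have h1 := hφspec j; rw [hj] at h1
  have h2 := hφspec k; rw [hk] at h2
  have : |μv j - μv k| ≤ R + δ + R := by
    calc |μv j - μv k|
        = |(hherm.eigenvalues α - μv j) * (-1) + (hherm.eigenvalues α - hherm.eigenvalues β)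
          + (hherm.eigenvalues β - μv k)| := by congr 1; ring
      _ ≤ |(hherm.eigenvalues α - μv j) * (-1) + (hherm.eigenvalues α - hherm.eigenvalues β)|
          + |hherm.eigenvalues β - μv k| := abs_add_le _ _
      _ ≤ |(hherm.eigenvalues α - μv j) * (-1)| + |hherm.eigenvalues α - hherm.eigenvalues β|
          + |hherm.eigenvalues β - μv k| := by
            exact add_le_add (abs_add_le _ _) le_rfl
      _ ≤ R + δ + R := by
          rw [abs_mul]
          simp only [abs_neg, abs_one, mul_one]
          exact add_le_add (add_le_add h1 (le_of_lt hlt)) h2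
  have := hμsep j k hjk
  linarith

lemma unif_slice (c ε δ : ℝ) (hδ0 : 0 < δ) (hδ1 : δ ≤ 1) (hε0 : 0 ≤ ε) (hε : ε ≤ 3 / 2 * δ) :
    unif {b : ℝ | |Real.sqrt (1 + b ^ 2) - c| ≤ ε} ≤ ENNReal.ofReal (3 * Real.sqrt δ) := by
  set m : ℝ := max (c - ε) 1 with hm
  have hm1 : 1 ≤ m := le_max_right _ _
  set s : ℝ := Real.sqrt (m ^ 2 - 1) with hs
  set t : ℝ := Real.sqrt (m ^ 2 - 1 + 9 * δ) with ht
  have hs0 : 0 ≤ s := Real.sqrt_nonneg _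
  have hssq : s ^ 2 = m ^ 2 - 1 := Real.sq_sqrt (by nlinarith)
  have htsq : t ^ 2 = m ^ 2 - 1 + 9 * δ := Real.sq_sqrt (by nlinarith)
  have ht0 : 0 ≤ t := Real.sqrt_nonneg _
  have hsub : {b : ℝ | |Real.sqrt (1 + b ^ 2) - c| ≤ ε} ∩ Set.Icc (-1 : ℝ) 1 ⊆
      Set.Icc (-t) (-s) ∪ Set.Icc s t := by
    rintro b ⟨hb, hb1⟩
    simp only [Set.mem_setOf_eq] at hb
    rw [abs_le] at hb
    simp only [Set.mem_Icc] at hb1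
    set g : ℝ := Real.sqrt (1 + b ^ 2) with hg
    have hgsq : g ^ 2 = 1 + b ^ 2 := Real.sq_sqrt (by positivity)
    have hg0 : 0 ≤ g := Real.sqrt_nonneg _
    have hg1 : 1 ≤ g := by nlinarith
    have hg2 : g ^ 2 ≤ 2 := by nlinarith
    have hgm : m ≤ g := max_le (by linarith [hb.1]) hg1
    have hup : g ^ 2 - m ^ 2 ≤ 9 * δ := by
      have h1 : g - m ≤ 2 * ε := by
        have : c - ε ≤ m := le_max_left _ _
        linarith [hb.2]
      have h2 : g + m ≤ 3 := by nlinarith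
      nlinarith
    have hb2lo : s ^ 2 ≤ b ^ 2 := by nlinarith
    have hb2hi : b ^ 2 ≤ t ^ 2 := by nlinarith
    have habs_lo : s ≤ |b| := by
      rw [← Real.sqrt_sq hs0, ← Real.sqrt_sq_eq_abs]
      exact Real.sqrt_le_sqrt hb2lo
    have habs_hi : |b| ≤ t := by
      rw [← Real.sqrt_sq ht0, ← Real.sqrt_sq_eq_abs]
      exact Real.sqrt_le_sqrt hb2hi
    rcases le_or_gt 0 b with hbs | hbs
    · right
      rw [abs_of_nonneg hbs] at habs_lo habs_hi
      exact ⟨habs_lo, habs_hi⟩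
    · left
      rw [abs_of_neg hbs] at habs_lo habs_hi
      constructor <;> linarith
  have hts : t - s ≤ 3 * Real.sqrt δ := by
    have h9 : m ^ 2 - 1 + 9 * δ ≤ (s + 3 * Real.sqrt δ) ^ 2 := by
      have hδs : Real.sqrt δ ^ 2 = δ := Real.sq_sqrt hδ0.le
      have : 0 ≤ s * (3 * Real.sqrt δ) := by positivity
      nlinarith
    have : t ≤ s + 3 * Real.sqrt δ := by
      rw [ht]
      calc Real.sqrt (m ^ 2 - 1 + 9 * δ) ≤ Real.sqrt ((s + 3 * Real.sqrt δ) ^ 2) :=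
            Real.sqrt_le_sqrt h9
        _ = s + 3 * Real.sqrt δ := Real.sqrt_sq (by positivity)
    linarith
  calc unif {b : ℝ | |Real.sqrt (1 + b ^ 2) - c| ≤ ε}
      = (2 : NNReal)⁻¹ • volume ({b : ℝ | |Real.sqrt (1 + b ^ 2) - c| ≤ ε} ∩ Set.Icc (-1 : ℝ) 1) := by
        rw [unif, Measure.smul_apply, Measure.restrict_apply' measurableSet_Icc]
    _ ≤ (2 : NNReal)⁻¹ • volume (Set.Icc (-t) (-s) ∪ Set.Icc s t) := by
        exact smul_le_smul_of_nonneg_left (measure_mono hsub) zero_le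
    _ ≤ (2 : NNReal)⁻¹ • (volume (Set.Icc (-t) (-s)) + volume (Set.Icc s t)) := by
        exact smul_le_smul_of_nonneg_left (measure_union_le _ _) zero_le
    _ = (2 : NNReal)⁻¹ • (ENNReal.ofReal (t - s) + ENNReal.ofReal (t - s)) := by
        rw [Real.volume_Icc, Real.volume_Icc]
        congr 2 <;> ring_nf
    _ = ENNReal.ofReal (t - s) := by
        rw [ENNReal.smul_def, smul_eq_mul, ← two_mul, ← mul_assoc,
          ENNReal.coe_inv (by norm_num : (2 : NNReal) ≠ 0), ENNReal.coe_two,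
          ENNReal.inv_mul_cancel two_ne_zero ENNReal.ofNat_ne_top, one_mul]
    _ ≤ ENNReal.ofReal (3 * Real.sqrt δ) := ENNReal.ofReal_le_ofReal hts

lemma map_pair {ι : Type*} [Fintype ι] [DecidableEq ι] (x y : ι) (hxy : x ≠ y) :
    Measure.map (fun u : ι → ℝ => (u x, u y)) (unifPi ι) = unif.prod unif := by
  refine (Measure.prod_eq fun S T hS hT => ?_).symm
  rw [Measure.map_apply ((measurable_pi_apply x).prodMk (measurable_pi_apply y)) (hS.prod hT)]
  have hpre : (fun u : ι → ℝ => (u x, u y)) ⁻¹' (S ×ˢ T) =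
      Set.pi Set.univ (fun i => if i = x then S else if i = y then T else Set.univ) := by
    ext u
    simp only [Set.mem_preimage, Set.mem_prod, Set.mem_pi, Set.mem_univ, forall_true_left]
    constructor
    · rintro ⟨h1, h2⟩ i
      by_cases hix : i = x
      · subst hix; rw [if_pos rfl]; exact h1
      · rw [if_neg hix]
        by_cases hiy : i = y
        · subst hiy; rw [if_pos rfl]; exact h2
        · rw [if_neg hiy]; trivial
    · intro h
      constructor
      · have := h x; rwa [if_pos rfl] at this
      · have := h y; rwa [if_neg hxy.symm, if_pos rfl] at this
  rw [hpre, unifPi, Measure.pi_pi]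
  rw [Fintype.prod_eq_mul x y hxy (fun z hz => by
    rw [if_neg hz.1, if_neg hz.2]; exact measure_univ)]
  rw [if_pos rfl, if_neg hxy.symm, if_pos rfl]

lemma pair_bound {ι : Type*} [Fintype ι] [DecidableEq ι] (x y : ι) (hxy : x ≠ y)
    (ε δ : ℝ) (hδ0 : 0 < δ) (hδ1 : δ ≤ 1) (hε0 : 0 ≤ ε) (hε : ε ≤ 3 / 2 * δ) :
    unifPi ι {u : ι → ℝ | |Real.sqrt (1 + (u x) ^ 2) - Real.sqrt (1 + (u y) ^ 2)| ≤ ε} ≤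
      ENNReal.ofReal (3 * Real.sqrt δ) := by
  set S : Set (ℝ × ℝ) :=
    {p : ℝ × ℝ | |Real.sqrt (1 + p.1 ^ 2) - Real.sqrt (1 + p.2 ^ 2)| ≤ ε} with hSdef
  have hcont : Continuous fun p : ℝ × ℝ =>
      |Real.sqrt (1 + p.1 ^ 2) - Real.sqrt (1 + p.2 ^ 2)| := by
    apply Continuous.abs
    apply Continuous.sub
    · exact (Real.continuous_sqrt).comp (by continuity)
    · exact (Real.continuous_sqrt).comp (by continuity)
  have hS : MeasurableSet S := hcont.measurable measurableSet_Iic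
  have hev : {u : ι → ℝ | |Real.sqrt (1 + (u x) ^ 2) - Real.sqrt (1 + (u y) ^ 2)| ≤ ε} =
      (fun u : ι → ℝ => (u x, u y)) ⁻¹' S := rfl
  rw [hev, ← Measure.map_apply ((measurable_pi_apply x).prodMk (measurable_pi_apply y)) hS,
    map_pair x y hxy, Measure.prod_apply hS]
  have hslice : ∀ a : ℝ, unif (Prod.mk a ⁻¹' S) ≤ ENNReal.ofReal (3 * Real.sqrt δ) := by
    intro a
    have : Prod.mk a ⁻¹' S =
        {b : ℝ | |Real.sqrt (1 + b ^ 2) - Real.sqrt (1 + a ^ 2)| ≤ ε} := by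
      ext b
      simp only [Set.mem_preimage, hSdef, Set.mem_setOf_eq, abs_sub_comm]
    rw [this]
    exact unif_slice (Real.sqrt (1 + a ^ 2)) ε δ hδ0 hδ1 hε0 hε
  calc ∫⁻ a, unif (Prod.mk a ⁻¹' S) ∂unif ≤ ∫⁻ _, ENNReal.ofReal (3 * Real.sqrt δ) ∂unif :=
        lintegral_mono fun a => hslice a
    _ = ENNReal.ofReal (3 * Real.sqrt δ) := by
        rw [lintegral_const, measure_univ, mul_one]

/-- macroscopic level spacing. There is `γ₀ > 0` such that for all
`0 < γ ≤ γ₀`, every rectangle `Λ`, and every `δ` with `γ^{1/4}/4 < δ ≤ 1`, the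
probability that two eigenvalues of `H(u)` (counted with multiplicity) are within `δ`
of each other is at most `3·√δ·|Λ|²`. -/
theorem minimum_level_spacing_macroscopic (d : ℕ) (hd : 1 ≤ d) :
    ∃ γ₀ : ℝ, 0 < γ₀ ∧
      ∀ γ : ℝ, 0 < γ → γ ≤ γ₀ →
      ∀ Λ : Finset (Fin d → ℤ), (∃ a b', Λ = Finset.Icc a b') →
      ∀ hherm : ∀ u : {x // x ∈ Λ} → ℝ, (Ham d γ Λ u).IsHermitian,
      ∀ δ : ℝ, γ ^ ((1 : ℝ) / 4) / 4 < δ → δ ≤ 1 →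
      unifPi {x // x ∈ Λ}
          {u | ∃ α β : {x // x ∈ Λ} × Fin 2, α ≠ β ∧
            |(hherm u).eigenvalues α - (hherm u).eigenvalues β| < δ} ≤
        ENNReal.ofReal (3 * Real.sqrt δ * (Λ.card : ℝ) ^ 2) := by
  classical
  have hd1 : (1 : ℝ) ≤ (d : ℝ) := by exact_mod_cast hd
  refine ⟨(1 / (32 * (d : ℝ))) ^ (4 : ℕ), by positivity, ?_⟩
  intro γ hγ0 hγγ₀ Λ _hrect hherm δ hγδ hδ1
  have hδ0 : 0 < δ := lt_trans (by positivity) hγδ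
  set a : ℝ := γ ^ ((1 : ℝ) / 4) with ha
  have ha0 : 0 < a := Real.rpow_pos_of_pos hγ0 _
  have ha4 : a < 4 * δ := by
    have := hγδ; rw [div_lt_iff₀ (by norm_num : (0:ℝ) < 4)] at this; linarith
  have haγ₀ : a ≤ 1 / (32 * (d : ℝ)) := by
    calc a ≤ ((1 / (32 * (d : ℝ))) ^ (4 : ℕ)) ^ ((1 : ℝ) / 4) :=
          Real.rpow_le_rpow hγ0.le hγγ₀ (by norm_num)
      _ = 1 / (32 * (d : ℝ)) := by
          rw [← Real.rpow_natCast (1 / (32 * (d : ℝ))) 4, ← Real.rpow_mul (by positivity)]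
          norm_num
  have hγa : γ = a ^ (4 : ℕ) := by
    rw [ha, ← Real.rpow_natCast (γ ^ ((1 : ℝ) / 4)) 4, ← Real.rpow_mul hγ0.le]
    norm_num
  have h32 : 32 * (d : ℝ) * a ≤ 1 := by
    have := (le_div_iff₀ (by positivity : (0:ℝ) < 32 * (d : ℝ))).mp haγ₀
    linarith
  have hkey : 4 * (d : ℝ) * γ ≤ δ / 2 := by
    have h3 : (32 * (d : ℝ) * a) ^ 3 ≤ 1 := pow_le_one₀ (by positivity) h32
    have hint1 : 0 ≤ (d : ℝ) * (a ^ 3 * (4 * δ - a)) :=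
      mul_nonneg (by positivity) (mul_nonneg (by positivity) (by linarith))
    have hd3 : 0 ≤ (d : ℝ) ^ 3 - (d : ℝ) := by
      have h := mul_nonneg (mul_nonneg (by linarith : (0:ℝ) ≤ (d:ℝ) - 1)
        (by linarith : (0:ℝ) ≤ (d:ℝ))) (by linarith : (0:ℝ) ≤ (d:ℝ) + 1)
      nlinarith [h]
    have hint2 : 0 ≤ δ * (((d : ℝ) ^ 3 - (d : ℝ)) * a ^ 3) :=
      mul_nonneg hδ0.le (mul_nonneg hd3 (by positivity))
    have hint3 : 0 ≤ δ * (1 - 32768 * (d : ℝ) ^ 3 * a ^ 3) := by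
      have : 32768 * (d : ℝ) ^ 3 * a ^ 3 ≤ 1 := by nlinarith [h3]
      exact mul_nonneg hδ0.le (by linarith)
    rw [hγa]
    nlinarith [hint1, hint2, hint3]
  set ε : ℝ := δ + 4 * (d : ℝ) * γ with hε
  have hdγ0 : 0 ≤ 4 * (d : ℝ) * γ := by positivity
  have hε0 : 0 ≤ ε := by rw [hε]; linarith
  have hε32 : ε ≤ 3 / 2 * δ := by rw [hε]; linarith
  have hsmall : 4 * (d : ℝ) * γ ≤ 1 / 2 := le_trans hkey (by linarith)
  set E : {x // x ∈ Λ} → {x // x ∈ Λ} → Set ({x // x ∈ Λ} → ℝ) := fun x y =>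
    {u | |Real.sqrt (1 + (u x) ^ 2) - Real.sqrt (1 + (u y) ^ 2)| ≤ ε} with hE
  have hsubset : {u | ∃ α β : {x // x ∈ Λ} × Fin 2, α ≠ β ∧
      |(hherm u).eigenvalues α - (hherm u).eigenvalues β| < δ} ⊆
      ⋃ (x : {x // x ∈ Λ}) (y : {x // x ∈ Λ}) (_ : x ≠ y), E x y := by
    intro u hu
    by_contra hnot
    simp only [Set.mem_iUnion, not_exists, hE, Set.mem_setOf_eq] at hnot
    obtain ⟨α, β, hab, hlt⟩ := hu
    exact spacing_of_sep γ δ hγ0 hδ0 hδ1 hsmall Λ u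
      (fun x y hxy => not_le.mp (hnot x y hxy)) (hherm u) α β hab hlt
  have hpair : ∀ x y : {x // x ∈ Λ},
      unifPi {x // x ∈ Λ} (⋃ (_ : x ≠ y), E x y) ≤ ENNReal.ofReal (3 * Real.sqrt δ) := by
    intro x y
    by_cases hxy : x = y
    · subst hxy
      have : (⋃ (_ : x ≠ x), E x x) = ∅ := by simp
      rw [this, measure_empty]
      exact zero_le
    · refine le_trans (measure_mono (Set.iUnion_subset fun _ => subset_rfl)) ?_
      exact pair_bound x y hxy ε δ hδ0 hδ1 hε0 hε32
  set N : ℕ := Λ.card with hN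
  have hNcard : Fintype.card {x // x ∈ Λ} = N := Fintype.card_coe Λ
  calc unifPi {x // x ∈ Λ} {u | ∃ α β : {x // x ∈ Λ} × Fin 2, α ≠ β ∧
        |(hherm u).eigenvalues α - (hherm u).eigenvalues β| < δ}
      ≤ unifPi {x // x ∈ Λ} (⋃ (x : {x // x ∈ Λ}) (y : {x // x ∈ Λ}) (_ : x ≠ y), E x y) :=
        measure_mono hsubset
    _ ≤ ∑ x : {x // x ∈ Λ}, unifPi {x // x ∈ Λ} (⋃ (y : {x // x ∈ Λ}) (_ : x ≠ y), E x y) :=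
        measure_iUnion_fintype_le _ _
    _ ≤ ∑ x : {x // x ∈ Λ}, ∑ y : {x // x ∈ Λ}, unifPi {x // x ∈ Λ} (⋃ (_ : x ≠ y), E x y) :=
        Finset.sum_le_sum fun x _ => measure_iUnion_fintype_le _ _
    _ ≤ ∑ _x : {x // x ∈ Λ}, ∑ _y : {x // x ∈ Λ}, ENNReal.ofReal (3 * Real.sqrt δ) :=
        Finset.sum_le_sum fun x _ => Finset.sum_le_sum fun y _ => hpair x y
    _ = (N : ℝ≥0∞) * ((N : ℝ≥0∞) * ENNReal.ofReal (3 * Real.sqrt δ)) := by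
        rw [Finset.sum_const, Finset.sum_const, Finset.card_univ, hNcard, nsmul_eq_mul,
          nsmul_eq_mul]
    _ = ENNReal.ofReal (3 * Real.sqrt δ * (N : ℝ) ^ 2) := by
        symm
        rw [ENNReal.ofReal_mul (by positivity : (0:ℝ) ≤ 3 * Real.sqrt δ),
          ENNReal.ofReal_pow (Nat.cast_nonneg N), ENNReal.ofReal_natCast]
        ring
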